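/- For integers 0 < k < n, the binomial coefficient satisfies sqrt(n/(8k(n-k))) * 2^(n*H(k/n)) ≤ C(n,k) ≤ sqrt(n/(2πk(n-k))) * 2^(n*H(k/n)), where H(p) = -p*log₂(p) - (1-p)*log₂(1-p) is the binary entropy function. -/

import Mathlib

noncomputable def binH (p : ℝ) : ℝ := -p * Real.logb 2 p - (1 - p) * Real.logb 2 (1 - p)

section Aux
open Stirling Real

-- lower bound: √π ≤ stirlingSeq m for m ≥ 1
lemma sqrtPi_le (m : ℕ) (hm : 0 < m) : Real.sqrt π ≤ stirlingSeq m := by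
  obtain ⟨m, rfl⟩ := Nat.exists_eq_add_of_le hm
  have h : Filter.Tendsto (stirlingSeq ∘ Nat.succ) Filter.atTop (nhds (Real.sqrt π)) :=
    tendsto_stirlingSeq_sqrt_pi.comp (Filter.tendsto_add_atTop_nat 1)
  simpa [Nat.add_comm] using stirlingSeq'_antitone.le_of_tendsto h m

-- antitone
lemma stirling_anti {a b : ℕ} (ha : 0 < a) (hab : a ≤ b) : stirlingSeq b ≤ stirlingSeq a := by
  have := stirlingSeq'_antitone (show a - 1 ≤ b - 1 by omega)
  simpa [Function.comp, Nat.succ_eq_add_one, Nat.sub_add_cancel ha,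
    Nat.sub_add_cancel (ha.trans_le hab)] using this

lemma fact_eq (m : ℕ) (hm : 0 < m) :
    (m.factorial : ℝ) = stirlingSeq m * (Real.sqrt (2*m) * ((m:ℝ)/Real.exp 1)^m) := by
  have hm' : (0:ℝ) < m := by exact_mod_cast hm
  have h : Real.sqrt (2*(m:ℝ)) * ((m:ℝ)/Real.exp 1)^m ≠ 0 := by positivity
  rw [stirlingSeq, div_mul_cancel₀ _ h]


lemma s2_eq : stirlingSeq 2 = Real.exp 1 ^ 2 / 4 := by
  have h4 : Real.sqrt (2*(2:ℕ)) = 2 := by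
    rw [show (2*(2:ℕ):ℝ) = 2^2 by norm_num, Real.sqrt_sq (by norm_num)]
  rw [stirlingSeq, h4]
  have he := Real.exp_pos 1
  norm_num [Nat.factorial]
  field_simp
  rw [← Real.exp_nat_mul]; norm_num; ring

lemma sqrtpi_ge : (1.7724:ℝ) ≤ Real.sqrt π := by
  rw [show (1.7724:ℝ) = Real.sqrt (1.7724^2) from (Real.sqrt_sq (by norm_num)).symm]
  exact Real.sqrt_le_sqrt (by nlinarith [Real.pi_gt_d6])

lemma low22 : Real.exp 1 ^ 2 / 4 * (Real.exp 1 ^ 2 / 4) ≤ 2 * Real.sqrt π := by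
  have he : Real.exp 1 < 2.7182818286 := Real.exp_one_lt_d9
  have he0 := Real.exp_pos 1
  have h2 : Real.exp 1 ^ 2 ≤ 7.3890561 := by nlinarith
  have h4 : Real.exp 1 ^ 4 ≤ 54.5982 := by nlinarith
  nlinarith [sqrtpi_ge]

-- the k=1, j ≥ 3 case
lemma low1j (m : ℕ) : stirlingSeq 1 * stirlingSeq (m+3) ≤ 2 * stirlingSeq (1 + (m+3)) := by
  have h1 := log_stirlingSeq_sub_log_stirlingSeq_succ (m+2+1)
  have hd : Real.log (stirlingSeq (m+3)) - Real.log (stirlingSeq (m+4)) ≤ 1/36 := by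
    refine h1.trans ?_
    have : (36:ℝ) ≤ 4 * (↑(m+2+1):ℝ)^2 := by
      have : (3:ℝ) ≤ (↑(m+2+1):ℝ) := by push_cast; linarith [Nat.cast_nonneg (α := ℝ) m]
      nlinarith
    rw [div_le_div_iff₀ (by positivity) (by norm_num)]
    linarith
  have hp1 := stirlingSeq'_pos 0
  have hp3 := stirlingSeq'_pos (m+2)
  have hp4 := stirlingSeq'_pos (m+3)
  rw [show 1 + (m+3) = m+4 by omega]
  rw [← Real.log_le_log_iff (by positivity) (by positivity),
    Real.log_mul (ne_of_gt hp1) (ne_of_gt hp3),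
    Real.log_mul (by norm_num) (ne_of_gt hp4)]
  have hs1 : Real.log (stirlingSeq 1) = 1 - Real.log 2 / 2 := by
    rw [stirlingSeq_one, Real.log_div (by positivity) (by positivity),
      Real.log_exp, Real.log_sqrt (by norm_num)]
  have hl2 : (0.6931471803:ℝ) < Real.log 2 := Real.log_two_gt_d9
  rw [hs1]
  linarith


lemma exp3 : Real.exp 3 = Real.exp 1 ^ 3 := by
  rw [← Real.exp_nat_mul]; norm_num

lemma s3_eq : stirlingSeq 3 = 2 * Real.exp 1 ^ 3 / (9 * Real.sqrt 6) := by
  have h6 : Real.sqrt (2*(3:ℕ)) = Real.sqrt 6 := by norm_num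
  have h6p : (0:ℝ) < Real.sqrt 6 := Real.sqrt_pos.mpr (by norm_num)
  have he := Real.exp_pos 1
  rw [stirlingSeq, h6]
  norm_num [Nat.factorial]
  rw [div_eq_div_iff (by positivity) (by positivity), exp3]
  field_simp
  ring

lemma low11 : stirlingSeq 1 * stirlingSeq 1 ≤ 2 * stirlingSeq 2 := by
  rw [stirlingSeq_one, s2_eq, div_mul_div_comm, Real.mul_self_sqrt (by norm_num)]
  nlinarith [Real.exp_pos 1]

lemma sqrt_ineq : 9 * Real.sqrt 6 ≤ 16 * Real.sqrt 2 := by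
  nlinarith [Real.sq_sqrt (show (0:ℝ)≤2 by norm_num), Real.sq_sqrt (show (0:ℝ)≤6 by norm_num),
    Real.sqrt_nonneg 2, Real.sqrt_nonneg 6, sq_nonneg (16*Real.sqrt 2 - 9*Real.sqrt 6)]

lemma low12 : stirlingSeq 1 * stirlingSeq 2 ≤ 2 * stirlingSeq 3 := by
  rw [stirlingSeq_one, s2_eq, s3_eq]
  have h2 : (0:ℝ) < Real.sqrt 2 := Real.sqrt_pos.mpr (by norm_num)
  have h6 : (0:ℝ) < Real.sqrt 6 := Real.sqrt_pos.mpr (by norm_num)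
  have he := Real.exp_pos 1
  rw [div_mul_div_comm,
    show (2:ℝ) * (2*Real.exp 1^3/(9*Real.sqrt 6)) = (4*Real.exp 1^3)/(9*Real.sqrt 6) by ring,
    div_le_div_iff₀ (by positivity) (by positivity)]
  have h3 := pow_pos he 3
  nlinarith [mul_le_mul_of_nonneg_left sqrt_ineq (le_of_lt h3)]



lemma spos (m : ℕ) (hm : 0 < m) : 0 < stirlingSeq m := by
  obtain ⟨m, rfl⟩ := Nat.exists_eq_add_of_le hm
  simpa [Nat.add_comm] using stirlingSeq'_pos m

lemma ratio_low (k j : ℕ) (hk : 0 < k) (hj : 0 < j) :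
    stirlingSeq k * stirlingSeq j ≤ 2 * stirlingSeq (k+j) := by
  wlog h : k ≤ j generalizing k j
  · have := this j k hj hk (by omega)
    rwa [mul_comm, Nat.add_comm] at this
  rcases Nat.lt_or_ge k 2 with hk2 | hk2
  · have hk1 : k = 1 := by omega
    subst hk1
    match j, hj with
    | 1, _ => exact low11
    | 2, _ => exact low12
    | (m+3), _ => exact low1j m
  · have h2 : stirlingSeq k ≤ Real.exp 1 ^ 2 / 4 := s2_eq ▸ stirling_anti (by norm_num) hk2
    have h3 : stirlingSeq j ≤ Real.exp 1 ^ 2 / 4 := s2_eq ▸ stirling_anti (by norm_num) (by omega)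
    have h4 : Real.sqrt π ≤ stirlingSeq (k+j) := sqrtPi_le _ (by omega)
    have h5 := (spos k hk).le
    have h6 := (spos j hj).le
    calc stirlingSeq k * stirlingSeq j ≤ Real.exp 1 ^ 2 / 4 * (Real.exp 1 ^ 2 / 4) :=
          mul_le_mul h2 h3 h6 (by positivity)
      _ ≤ 2 * Real.sqrt π := low22
      _ ≤ 2 * stirlingSeq (k+j) := by linarith

lemma ratio_up (k j : ℕ) (hk : 0 < k) (hj : 0 < j) :
    Real.sqrt π * stirlingSeq (k+j) ≤ stirlingSeq k * stirlingSeq j :=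
  mul_le_mul (sqrtPi_le k hk) (stirling_anti hj (by omega)) (spos _ (by omega)).le (spos k hk).le


lemma entropy_eq (n k j : ℕ) (hk : 0 < k) (hj : 0 < j) (hn : k + j = n) :
    (2:ℝ) ^ ((n:ℝ) * binH ((k:ℝ)/n)) = (n:ℝ)^n / ((k:ℝ)^k * (j:ℝ)^j) := by
  have hk' : (0:ℝ) < k := by exact_mod_cast hk
  have hj' : (0:ℝ) < j := by exact_mod_cast hj
  have hn' : (0:ℝ) < n := by exact_mod_cast Nat.cast_pos.mpr (show 0 < n by omega)
  have hKJ : (k:ℝ) + j = n := by exact_mod_cast hn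
  have hRpos : (0:ℝ) < (n:ℝ)^n / ((k:ℝ)^k * (j:ℝ)^j) := by positivity
  rw [← Real.exp_log hRpos, Real.rpow_def_of_pos (by norm_num)]
  congr 1
  rw [Real.log_div (by positivity) (by positivity), Real.log_mul (by positivity) (by positivity),
    Real.log_pow, Real.log_pow, Real.log_pow]
  have h1 : 1 - (k:ℝ)/n = (j:ℝ)/n := by field_simp; linarith
  rw [binH, h1, Real.logb, Real.logb, Real.log_div (ne_of_gt hk') (ne_of_gt hn'),
    Real.log_div (ne_of_gt hj') (ne_of_gt hn')]
  have hl2 : Real.log 2 ≠ 0 := ne_of_gt (Real.log_pos one_lt_two)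
  field_simp
  ring_nf
  linear_combination (Real.log n) * hKJ




theorem stmt_0 (n k : ℕ) (hk : 0 < k) (hkn : k < n) :
    Real.sqrt ((n : ℝ) / (8 * k * (n - k))) * 2 ^ ((n : ℝ) * binH ((k : ℝ) / n)) ≤ (n.choose k : ℝ) ∧
    (n.choose k : ℝ) ≤ Real.sqrt ((n : ℝ) / (2 * Real.pi * k * (n - k))) * 2 ^ ((n : ℝ) * binH ((k : ℝ) / n)) := by
  set j := n - k with hj_def
  have hj : 0 < j := by omega
  have hn : k + j = n := by omega
  have hjR : ((j:ℕ):ℝ) = (n:ℝ) - (k:ℝ) := by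
    rw [hj_def]; push_cast [Nat.cast_sub hkn.le]; ring
  rw [← hjR]
  have hkR : (0:ℝ) < k := by exact_mod_cast hk
  have hjR' : (0:ℝ) < j := by exact_mod_cast hj
  have hnR : (0:ℝ) < n := by exact_mod_cast (by omega : 0 < n)
  set T : ℝ := (2:ℝ) ^ ((n : ℝ) * binH ((k : ℝ) / n)) with hT_def
  have hT : 0 < T := Real.rpow_pos_of_pos (by norm_num) _
  have hsn := spos n (by omega)
  have hsk := spos k hk
  have hsj := spos j hj
  have he := Real.exp_pos 1
  -- the three sqrt positivity facts
  have s2k : (0:ℝ) < Real.sqrt (2*k) := Real.sqrt_pos.mpr (by positivity)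
  have s2j : (0:ℝ) < Real.sqrt (2*j) := Real.sqrt_pos.mpr (by positivity)
  have sQ : (0:ℝ) < Real.sqrt ((n:ℝ)/(2*k*j)) := Real.sqrt_pos.mpr (by positivity)
  have e1 : Real.sqrt ((n:ℝ)/(2*k*j)) * (Real.sqrt (2*k) * Real.sqrt (2*j)) = Real.sqrt (2*n) := by
    rw [← Real.sqrt_mul (by positivity), ← Real.sqrt_mul (by positivity)]
    congr 1
    field_simp
  have e2 : ((n:ℝ)/Real.exp 1)^n = T * (((k:ℝ)/Real.exp 1)^k * ((j:ℝ)/Real.exp 1)^j) := by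
    rw [hT_def, entropy_eq n k j hk hj hn, div_pow, div_pow, div_pow]
    rw [div_mul_div_comm, div_mul_div_comm]
    rw [← pow_add, hn]
    field_simp
  have hfact : (n.choose k : ℝ) * (k.factorial : ℝ) * (j.factorial : ℝ) = (n.factorial : ℝ) := by
    exact_mod_cast congrArg (Nat.cast : ℕ → ℝ)
      (Nat.choose_mul_factorial_mul_factorial hkn.le)
  rw [fact_eq n (by omega), fact_eq k hk, fact_eq j hj, ← e1, e2] at hfact
  have hC : (n.choose k : ℝ) =
      stirlingSeq n / (stirlingSeq k * stirlingSeq j) * Real.sqrt ((n:ℝ)/(2*k*j)) * T := by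
    rw [div_mul_eq_mul_div, div_mul_eq_mul_div, eq_div_iff (ne_of_gt (mul_pos hsk hsj))]
    have hF : Real.sqrt (2*(k:ℝ)) * Real.sqrt (2*(j:ℝ)) *
        (((k:ℝ)/Real.exp 1)^k * ((j:ℝ)/Real.exp 1)^j) ≠ 0 := by positivity
    apply mul_right_cancel₀ hF
    linear_combination hfact
  constructor
  · have hsqrt8 : Real.sqrt ((n:ℝ)/(8*k*j)) = (1/2) * Real.sqrt ((n:ℝ)/(2*k*j)) := by
      rw [show (n:ℝ)/(8*k*j) = (1/2)^2 * ((n:ℝ)/(2*k*j)) by ring,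
        Real.sqrt_mul (by positivity), Real.sqrt_sq (by norm_num)]
    rw [hsqrt8, hC]
    have hR : (1/2 : ℝ) ≤ stirlingSeq n / (stirlingSeq k * stirlingSeq j) := by
      rw [le_div_iff₀ (by positivity)]
      have := ratio_low k j hk hj
      rw [hn] at this
      linarith
    have := mul_le_mul_of_nonneg_right (mul_le_mul_of_nonneg_right hR sQ.le) hT.le
    linarith
  · have hsqrtpi : Real.sqrt ((n:ℝ)/(2*π*k*j)) =
        (1/Real.sqrt π) * Real.sqrt ((n:ℝ)/(2*k*j)) := by
      have hpi := Real.pi_pos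
      rw [show (n:ℝ)/(2*π*k*j) = (1/π) * ((n:ℝ)/(2*k*j)) by ring,
        Real.sqrt_mul (by positivity), Real.sqrt_div' 1 hpi.le]
      norm_num
    rw [hsqrtpi, hC]
    have hpis : (0:ℝ) < Real.sqrt π := Real.sqrt_pos.mpr Real.pi_pos
    have hR : stirlingSeq n / (stirlingSeq k * stirlingSeq j) ≤ 1/Real.sqrt π := by
      rw [div_le_div_iff₀ (by positivity) hpis]
      have := ratio_up k j hk hj
      rw [hn] at this
      linarith
    have := mul_le_mul_of_nonneg_right (mul_le_mul_of_nonneg_right hR sQ.le) hT.le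
    linarith

end Aux
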